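/- Fix tuples s = (s_1,…,s_k) of non-negative integers and i = (i_1,…,i_k) with 0 ≤ i_j < M (k ≥ 0 arbitrary), and fix integers t ≥ 1 and 0 ≤ l < M. Then the function ℕ → K sending n to Σ_{0 < a < n, p | a, M | (a−l)} (1/a^t)·σ_p(s;i)(a) is a K-linear combination of the M functions σ_p((s_1,…,s_k,t);(i_1,…,i_k,j)) for 0 ≤ j < M. -/

import Mathlib

open Filter

noncomputable section

variable {K : Type*}

/-- Evaluation of the power series with coefficients `c` at the point `x`, as a `tsum`. -/
def evalPS [NormedField K] (c : ℕ → K) (x : K) : K := ∑' m, c m * x ^ m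

/-- The power series with coefficients `c` converges on the closed disc of radius `r`,
i.e. `‖c m‖ * r ^ m → 0`. -/
def PSConvOn [NormedField K] (c : ℕ → K) (r : ℝ) : Prop :=
  Filter.Tendsto (fun m => ‖c m‖ * r ^ m) Filter.atTop (nhds 0)

/-- `f`, regarded as a function on `{n : ℕ // n₀ ≤ n}`, is an `M`-power series function:
for every `i` with `0 < i ≤ pM` there is a power series `cᵢ` converging on a closed disc of
radius `rᵢ > |p| = 1/p` such that `f a = cᵢ (a - i)` for all `a ≥ n₀` with `pM ∣ a - i`. -/
def IsMPSF (p M n₀ : ℕ) [NormedField K] (f : ℕ → K) : Prop :=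
  ∀ i : ℕ, 0 < i → i ≤ p * M →
    ∃ (r : ℝ) (c : ℕ → K), (p : ℝ)⁻¹ < r ∧ PSConvOn c r ∧
      ∀ a : ℕ, n₀ ≤ a → ((p : ℤ) * M) ∣ ((a : ℤ) - (i : ℤ)) →
        f a = evalPS c ((a : K) - (i : K))

open scoped Classical in
/-- The cyclotomic `p`-adic iterated sum series `σ(s;i;m)(n)`: the sum of
`ζ^(i₁n₁+⋯+iₖnₖ)/(n₁^{s₁}⋯nₖ^{sₖ})` over all tuples `0 < n₁ < ⋯ < nₖ < n`
with `p ∣ nⱼ - mⱼ` for every `j`. -/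
def cycSum (p : ℕ) [Field K] (ζ : K) {k : ℕ} (s i m : Fin k → ℕ) (n : ℕ) : K :=
  ∑ t ∈ (Fintype.piFinset fun _ : Fin k => Finset.Ioo 0 n).filter
      (fun t : Fin k → ℕ => StrictMono t ∧ ∀ j, (p : ℤ) ∣ ((t j : ℤ) - (m j : ℤ))),
    ∏ j, ζ ^ (i j * t j) / (t j : K) ^ (s j)

/-- `σ_p(s;i) = σ(s;i;0)`. -/
def sigmaP (p : ℕ) [Field K] (ζ : K) {k : ℕ} (s i : Fin k → ℕ) : ℕ → K :=
  cycSum p ζ s i fun _ => 0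

/-- The index set of all pairs of tuples `(s, i)` with `s` a tuple of naturals and
`i` a tuple of residues mod `M`, of a common length `k ≥ 0`. -/
def SIdx (M : ℕ) : Type := Σ k : ℕ, (Fin k → ℕ) × (Fin k → Fin M)

/-- The function `σ_p(s;i)` attached to an index `u = (s, i)`. -/
def sigmaPIdx (p M : ℕ) [Field K] (ζ : K) (u : SIdx M) : ℕ → K :=
  sigmaP p ζ u.2.1 fun j => ((u.2.2 j : ℕ))

/-- `t ≤ s` for tuples: there is a strictly increasing reindexing `j` with `tₐ ≤ s_{j(a)}`. -/
def TupleLE {l k : ℕ} (t : Fin l → ℕ) (s : Fin k → ℕ) : Prop :=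
  ∃ j : Fin l → Fin k, StrictMono j ∧ ∀ a, t a ≤ s (j a)


open Finset in
open scoped Classical in
lemma sigmaP_snoc {k : ℕ} [Field K] (p : ℕ) (ζ : K) (s i : Fin k → ℕ) (t j n : ℕ) :
    sigmaP p ζ (Fin.snoc s t) (Fin.snoc i j) n =
    ∑ a ∈ (Finset.Ioo 0 n).filter (fun a => p ∣ a),
      (ζ ^ (j * a) / (a : K) ^ t) * sigmaP p ζ s i a := by
  unfold sigmaP cycSum
  simp_rw [Finset.mul_sum]
  rw [Finset.sum_sigma']
  refine Finset.sum_bij' (fun u _ => ⟨u (Fin.last k), Fin.init u⟩)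
    (fun x _ => Fin.snoc x.2 x.1) ?_ ?_ ?_ ?_ ?_
  · intro u hu
    simp only [Finset.mem_filter, Fintype.mem_piFinset] at hu
    obtain ⟨h1, h2, h3⟩ := hu
    simp only [Finset.mem_sigma, Finset.mem_filter, Fintype.mem_piFinset, Finset.mem_Ioo]
    refine ⟨⟨?_, ?_⟩, ?_, ?_, ?_⟩
    · exact Finset.mem_Ioo.mp (h1 (Fin.last k))
    · have := h3 (Fin.last k)
      simpa using Int.ofNat_dvd.mp (by simpa using this)
    · intro b
      have h4 := Finset.mem_Ioo.mp (h1 b.castSucc)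
      exact ⟨h4.1, h2 (Fin.castSucc_lt_last b)⟩
    · exact fun a b hab => h2 (Fin.castSucc_lt_castSucc_iff.mpr hab)
    · intro b; exact h3 b.castSucc
  · intro x hx
    simp only [Finset.mem_sigma, Finset.mem_filter, Fintype.mem_piFinset, Finset.mem_Ioo] at hx
    obtain ⟨⟨⟨ha0, han⟩, hpa⟩, hv, hsm, hdvd⟩ := hx
    simp only [Finset.mem_filter, Fintype.mem_piFinset, Finset.mem_Ioo]
    refine ⟨?_, ?_, ?_⟩
    · intro b
      refine Fin.lastCases ?_ ?_ b
      · simpa using ⟨ha0, han⟩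
      · intro b'
        simp only [Fin.snoc_castSucc]
        exact ⟨(hv b').1, lt_trans (hv b').2 han⟩
    · intro x y hxy
      rcases eq_or_ne y (Fin.last k) with rfl | hy
      · obtain ⟨x', rfl⟩ := Fin.exists_castSucc_eq.mpr (Fin.ne_last_of_lt hxy)
        simp only [Fin.snoc_castSucc, Fin.snoc_last]
        exact (hv x').2
      · obtain ⟨y', rfl⟩ := Fin.exists_castSucc_eq.mpr hy
        obtain ⟨x', rfl⟩ := Fin.exists_castSucc_eq.mpr
          (Fin.ne_last_of_lt (lt_trans hxy (Fin.castSucc_lt_last y')))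
        simp only [Fin.snoc_castSucc]
        exact hsm (Fin.castSucc_lt_castSucc_iff.mp hxy)
    · intro b
      refine Fin.lastCases ?_ ?_ b
      · simpa using Int.ofNat_dvd.mpr hpa
      · intro b'; simpa [Fin.snoc_castSucc] using hdvd b'
  · intro u _; exact Fin.snoc_init_self u
  · intro x _
    simp [Fin.snoc_last, Fin.init_snoc]
  · intro u hu
    simp only
    rw [Fin.prod_univ_castSucc]
    simp only [Fin.snoc_castSucc, Fin.snoc_last]
    rw [mul_comm]
    simp [Fin.init]

lemma rootsum {K : Type*} [Field K] {M : ℕ} (hM : 1 ≤ M) (hMK : (M : K) ≠ 0) (ζ : K)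
    (hζ : IsPrimitiveRoot ζ M) (l : ℕ) (hl : l < M) (a : ℕ) :
    ∑ j : Fin M, ζ ^ ((j : ℕ) * (M - l)) * ζ ^ ((j : ℕ) * a) =
      if (M : ℤ) ∣ (a : ℤ) - (l : ℤ) then (M : K) else 0 := by
  have h1 : ∀ j : ℕ, ζ ^ (j * (M - l)) * ζ ^ (j * a) = (ζ ^ (M - l + a)) ^ j := by
    intro j
    rw [← pow_add, ← Nat.mul_add, mul_comm j (M - l + a), pow_mul]
  have hdvd : ((M : ℤ) ∣ (a : ℤ) - (l : ℤ)) ↔ M ∣ (M - l + a) := by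
    have hcast : ((M - l + a : ℕ) : ℤ) = ((a : ℤ) - l) + M := by
      push_cast [Nat.cast_sub hl.le]
      ring
    rw [← Int.natCast_dvd_natCast, hcast, dvd_add_left (dvd_refl (M : ℤ))]
  simp_rw [h1]
  rw [Fin.sum_univ_eq_sum_range (fun j => (ζ ^ (M - l + a)) ^ j) M]
  by_cases h : M ∣ (M - l + a)
  · rw [if_pos (hdvd.mpr h), (hζ.pow_eq_one_iff_dvd _).mpr h]
    simp
  · rw [if_neg (fun hc => h (hdvd.mp hc))]
    have hx : ζ ^ (M - l + a) ≠ 1 := fun he => h ((hζ.pow_eq_one_iff_dvd _).mp he)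
    rw [geom_sum_eq hx M, ← pow_mul, mul_comm, pow_mul, hζ.pow_eq_one, one_pow]
    simp


open scoped Classical in
/-- for `t ≥ 1` and `0 ≤ l < M`, the function
`n ↦ ∑_{0<a<n, p∣a, M∣(a-l)} (1/a^t) σ_p(s;i)(a)` is a `K`-linear combination of the `M`
functions `σ_p((s,t);(i,j))` for `0 ≤ j < M`. -/
theorem sum_residue_class_isCombination (p M : ℕ) [Fact p.Prime] (hM : 1 ≤ M) (hpM : ¬ p ∣ M)
    [NormedField K] [CompleteSpace K] [Algebra ℚ_[p] K]
    (hiso : ∀ x : ℚ_[p], ‖algebraMap ℚ_[p] K x‖ = ‖x‖)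
    (ζ : K) (hζ : IsPrimitiveRoot ζ M) (hgen : Algebra.adjoin ℚ_[p] {ζ} = ⊤)
    (k : ℕ) (s i : Fin k → ℕ) (hi : ∀ b, i b < M)
    (t : ℕ) (ht : 1 ≤ t) (l : ℕ) (hl : l < M) :
    ∃ c : Fin M → K, ∀ n : ℕ,
      (∑ a ∈ (Finset.Ioo 0 n).filter
          (fun a => p ∣ a ∧ (M : ℤ) ∣ ((a : ℤ) - (l : ℤ))),
        (1 / (a : K) ^ t) * sigmaP p ζ s i a) =
      ∑ j : Fin M, c j * sigmaP p ζ (Fin.snoc s t) (Fin.snoc i (j : ℕ)) n := by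
  classical
  have hchar : CharZero K := charZero_of_injective_algebraMap (algebraMap ℚ_[p] K).injective
  have hMK : (M : K) ≠ 0 := Nat.cast_ne_zero.mpr (by omega)
  refine ⟨fun j => ζ ^ ((j : ℕ) * (M - l)) / M, fun n => ?_⟩
  simp_rw [sigmaP_snoc, Finset.mul_sum]
  rw [Finset.sum_comm]
  have hinner : ∀ a : ℕ,
      (∑ j : Fin M, ζ ^ ((j : ℕ) * (M - l)) / M *
        ((ζ ^ ((j : ℕ) * a) / (a : K) ^ t) * sigmaP p ζ s i a)) =
      if (M : ℤ) ∣ (a : ℤ) - (l : ℤ) then (1 / (a : K) ^ t) * sigmaP p ζ s i a else 0 := by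
    intro a
    have h := rootsum hM hMK ζ hζ l hl a
    have hstep : (∑ j : Fin M, ζ ^ ((j : ℕ) * (M - l)) / M *
        ((ζ ^ ((j : ℕ) * a) / (a : K) ^ t) * sigmaP p ζ s i a)) =
        (∑ j : Fin M, ζ ^ ((j : ℕ) * (M - l)) * ζ ^ ((j : ℕ) * a)) *
          ((M : K)⁻¹ * ((1 / (a : K) ^ t) * sigmaP p ζ s i a)) := by
      rw [Finset.sum_mul]
      refine Finset.sum_congr rfl fun j _ => ?_
      simp only [div_eq_mul_inv, one_mul]
      ring
    rw [hstep, h]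
    split_ifs with hd
    · rw [← mul_assoc, mul_inv_cancel₀ hMK, one_mul]
    · simp
  rw [Finset.sum_congr rfl (fun a _ => hinner a), ← Finset.sum_filter, Finset.filter_filter]


end
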